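/- Suppose n items arrive in mini-batches of b items per PE across p PEs, each item's key drawn i.i.d. from a continuous distribution, and a PE's reservoir insertion in batch i (for i ≥ k/(bp)) occurs for each item independently with probability at most k/(i·p·b). Then the expected total number of insertions per PE over all batches i with k/(bp) ≤ i ≤ n/(bp), plus the at most k/p insertions of the initial batches, is at most (k/p)·(2 + ln(n/k)). -/

import Mathlib

theorem stmt10 (n k b p : ℕ) (hk : 0 < k) (hb : 0 < b) (hp : 0 < p) (hkn : k ≤ n)
    (hbp : b * p ≤ k)
    (X : ℕ → ℝ) (hX0 : ∀ i, 0 ≤ X i) (hXb : ∀ i, X i ≤ (k:ℝ) / (i * p)) :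
    (k:ℝ) / p + ∑ i ∈ Finset.Icc ⌈(k:ℝ) / (b * p)⌉₊ ⌊(n:ℝ) / (b * p)⌋₊, X i
      ≤ (k:ℝ) / p * (2 + Real.log ((n:ℝ) / k)) := by
  set m' := ⌈(k:ℝ) / (b * p)⌉₊ with hm'
  set m := ⌊(n:ℝ) / (b * p)⌋₊ with hm
  have hbp0 : (0:ℝ) < (b:ℝ) * p := by positivity
  have hkp : (0:ℝ) < (k:ℝ) / p := by positivity
  have hnk : (1:ℝ) ≤ (n:ℝ) / k := by
    rw [le_div_iff₀ (by positivity)]; simpa using (Nat.cast_le (α := ℝ)).2 hkn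
  have hlognk : 0 ≤ Real.log ((n:ℝ) / k) := Real.log_nonneg hnk
  have hone : (1:ℝ) ≤ (k:ℝ) / (b * p) := by
    rw [le_div_iff₀ hbp0]; simpa using (Nat.cast_le (α := ℝ)).2 hbp
  have hm'1 : 1 ≤ m' := Nat.one_le_ceil_iff.2 (by linarith)
  have hm'le : (m' : ℝ) ≤ Real.log (m') - Real.log (m') + m' := by ring_nf; rfl
  by_cases hmm : m < m'
  · rw [Finset.Icc_eq_empty (by omega), Finset.sum_empty, add_zero]
    nlinarith
  push_neg at hmm
  -- step 1: bound sum of X by (k/p) * harmonic difference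
  have step1 : ∑ i ∈ Finset.Icc m' m, X i
      ≤ (k:ℝ) / p * ((harmonic m : ℝ) - (harmonic (m' - 1) : ℝ)) := by
    have hsplit : (harmonic (m'-1) : ℝ) + ∑ i ∈ Finset.Icc m' m, ((i:ℝ))⁻¹
        = (harmonic m : ℝ) := by
      have h1 : (harmonic (m'-1) : ℝ) = ∑ i ∈ Finset.Ioc 0 (m'-1), ((i:ℝ))⁻¹ := by
        rw [harmonic_eq_sum_Icc]; push_cast
        rw [← Finset.Icc_add_one_left_eq_Ioc]; rfl
      have h2 : (harmonic m : ℝ) = ∑ i ∈ Finset.Ioc 0 m, ((i:ℝ))⁻¹ := by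
        rw [harmonic_eq_sum_Icc]; push_cast
        rw [← Finset.Icc_add_one_left_eq_Ioc]; rfl
      have h3 : Finset.Icc m' m = Finset.Ioc (m'-1) m := by
        rw [← Finset.Icc_add_one_left_eq_Ioc]; congr 1; omega
      rw [h1, h2, h3,
        Finset.sum_Ioc_consecutive _ (Nat.zero_le _) (by omega)]
    calc ∑ i ∈ Finset.Icc m' m, X i
        ≤ ∑ i ∈ Finset.Icc m' m, (k:ℝ)/p * ((i:ℝ))⁻¹ := by
          apply Finset.sum_le_sum
          intro i hi
          refine (hXb i).trans (le_of_eq ?_)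
          rw [div_mul_eq_div_div_swap, div_eq_mul_inv ((k:ℝ)/p)]
      _ = (k:ℝ)/p * ∑ i ∈ Finset.Icc m' m, ((i:ℝ))⁻¹ := (Finset.mul_sum _ _ _).symm
      _ = (k:ℝ)/p * ((harmonic m : ℝ) - (harmonic (m'-1) : ℝ)) := by
          rw [← hsplit]; ring
  -- step 2: harmonic bounds
  have h4 : (harmonic m : ℝ) ≤ 1 + Real.log m := harmonic_le_one_add_log m
  have h5 : Real.log (m' : ℝ) ≤ (harmonic (m'-1) : ℝ) := by
    have := log_add_one_le_harmonic (m'-1)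
    have e : (m' - 1 + 1 : ℕ) = m' := by omega
    rwa [e] at this
  -- step 3: log m - log m' ≤ log (n/k)
  have hm'pos : (0:ℝ) < (m' : ℝ) := by exact_mod_cast hm'1
  have hmpos : (0:ℝ) < (m : ℝ) := by exact_mod_cast (by omega : 0 < m)
  have hmle : (m : ℝ) ≤ (n:ℝ) / (b*p) := Nat.floor_le (by positivity)
  have hm'ge : (k:ℝ) / (b*p) ≤ (m' : ℝ) := Nat.le_ceil _
  have h6 : Real.log m - Real.log m' ≤ Real.log ((n:ℝ)/k) := by
    rw [← Real.log_div (ne_of_gt hmpos) (ne_of_gt hm'pos)]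
    apply Real.log_le_log (by positivity)
    rw [div_le_div_iff₀ hm'pos (by positivity)]
    calc (m:ℝ) * k ≤ ((n:ℝ)/(b*p)) * k :=
          mul_le_mul_of_nonneg_right hmle (by positivity)
      _ = ((n:ℝ)/k) * ((k:ℝ)/(b*p)) * k := by
          field_simp
      _ ≤ ((n:ℝ)/k) * (m':ℝ) * k :=
          mul_le_mul_of_nonneg_right
            (mul_le_mul_of_nonneg_left hm'ge (by positivity)) (by positivity)
      _ = (n:ℝ) * m' := by
          field_simp
  calc (k:ℝ)/p + ∑ i ∈ Finset.Icc m' m, X i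
      ≤ (k:ℝ)/p + (k:ℝ)/p * ((harmonic m : ℝ) - (harmonic (m'-1) : ℝ)) := by linarith
    _ ≤ (k:ℝ)/p + (k:ℝ)/p * (1 + Real.log ((n:ℝ)/k)) := by nlinarith
    _ = (k:ℝ)/p * (2 + Real.log ((n:ℝ)/k)) := by ring
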